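/- arXiv:2508.08664 — 4 statements merged into one kernel-verified Lean document; each statement's English description precedes it below -/
import Mathlib

section
/- For positive definite n×n complex matrices A and B, the geometric mean of A+B and (A⁻¹+B⁻¹)⁻¹ equals the geometric mean of A and B, i.e. (A+B) ♯ (A⁻¹+B⁻¹)⁻¹ = A ♯ B. -/
open Matrix
open scoped ComplexOrder

/-- The positive square root of a positive semidefinite matrix, realized via the
continuous functional calculus for Hermitian matrices. -/
noncomputable def msqrt {n : Type*} [Fintype n] [DecidableEq n]
    (A : Matrix n n ℂ) : Matrix n n ℂ := cfc Real.sqrt A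

/-- The matrix geometric mean `A ♯ B = A^{1/2} (A^{-1/2} B A^{-1/2})^{1/2} A^{1/2}`. -/
noncomputable def geom {n : Type*} [Fintype n] [DecidableEq n]
    (A B : Matrix n n ℂ) : Matrix n n ℂ :=
  msqrt A * msqrt ((msqrt A)⁻¹ * B * (msqrt A)⁻¹) * msqrt A

section Aux

variable {n : Type*} [Fintype n] [DecidableEq n]

open scoped MatrixOrder

lemma msqrt_eq {A : Matrix n n ℂ} (hA : A.PosSemidef) : msqrt A = CFC.sqrt A := by
  rw [msqrt, CFC.sqrt_eq_real_sqrt A hA.nonneg, cfcₙ_eq_cfc]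

lemma msqrt_mul_self {A : Matrix n n ℂ} (hA : A.PosSemidef) : msqrt A * msqrt A = A := by
  rw [msqrt_eq hA]; exact CFC.sqrt_mul_sqrt_self A hA.nonneg

lemma posDef_conj {C T : Matrix n n ℂ} (hT : T.PosDef) (hC : IsUnit C.det) :
    (Cᴴ * T * C).PosDef := by
  refine .of_dotProduct_mulVec_pos (isHermitian_conjTranspose_mul_mul C hT.1) fun x hx => ?_
  have hCx : C *ᵥ x ≠ 0 := by
    intro h
    apply hx
    have := congrArg (fun y => C⁻¹ *ᵥ y) h
    simpa [Matrix.mulVec_mulVec, Matrix.nonsing_inv_mul _ hC] using this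
  have key : star x ⬝ᵥ (Cᴴ * T * C) *ᵥ x = star (C *ᵥ x) ⬝ᵥ T *ᵥ (C *ᵥ x) := by
    rw [star_mulVec, ← Matrix.dotProduct_mulVec, Matrix.mulVec_mulVec,
      Matrix.mulVec_mulVec, Matrix.mul_assoc]
  rw [key]
  exact hT.dotProduct_mulVec_pos hCx

lemma posDef_of_posSemidef_isUnit {S : Matrix n n ℂ} (h1 : S.PosSemidef)
    (h2 : IsUnit S.det) : S.PosDef := by
  have hT := (CFC.sqrt_nonneg S).posSemidef
  have hTT := CFC.sqrt_mul_sqrt_self S h1.nonneg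
  have hTu : IsUnit (CFC.sqrt S).det := by
    have hdet : (CFC.sqrt S).det * (CFC.sqrt S).det = S.det := by rw [← Matrix.det_mul, hTT]
    exact isUnit_of_mul_isUnit_left (hdet ▸ h2)
  refine .of_dotProduct_mulVec_pos h1.1 fun x hx => ?_
  have hTx : CFC.sqrt S *ᵥ x ≠ 0 := by
    intro h
    apply hx
    have := congrArg (fun y => (CFC.sqrt S)⁻¹ *ᵥ y) h
    simpa [Matrix.mulVec_mulVec, Matrix.nonsing_inv_mul _ hTu] using this
  have key : star x ⬝ᵥ S *ᵥ x = star (CFC.sqrt S *ᵥ x) ⬝ᵥ (CFC.sqrt S *ᵥ x) := by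
    rw [star_mulVec, ← Matrix.dotProduct_mulVec, Matrix.mulVec_mulVec, hT.1.eq, hTT]
  rw [key]
  exact Matrix.dotProduct_star_self_pos_iff.mpr hTx

lemma msqrt_posDef {A : Matrix n n ℂ} (hA : A.PosDef) : (msqrt A).PosDef := by
  rw [msqrt_eq hA.posSemidef]
  refine posDef_of_posSemidef_isUnit (CFC.sqrt_nonneg A).posSemidef ?_
  have hdet : (CFC.sqrt A).det * (CFC.sqrt A).det = A.det := by
    rw [← Matrix.det_mul, CFC.sqrt_mul_sqrt_self A hA.posSemidef.nonneg]
  exact isUnit_of_mul_isUnit_left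
    (hdet ▸ (Matrix.isUnit_iff_isUnit_det _).mp hA.isUnit)

lemma msqrt_eq_of_sq {X G : Matrix n n ℂ} (hG : G.PosSemidef) (h : X = G * G) :
    msqrt X = G := by
  have hX : X.PosSemidef := by
    have := Matrix.posSemidef_conjTranspose_mul_self G
    rwa [hG.1.eq, ← h] at this
  rw [msqrt_eq hX]
  exact CFC.sqrt_unique h.symm hG.nonneg

lemma geom_spec {A B : Matrix n n ℂ} (hA : A.PosDef) (hB : B.PosDef) :
    (geom A B).PosDef ∧ geom A B * A⁻¹ * geom A B = B := by
  set S := msqrt A with hSdef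
  have hS : S.PosDef := msqrt_posDef hA
  have hSi : S⁻¹.PosDef := hS.inv
  have hSd : IsUnit S.det := (Matrix.isUnit_iff_isUnit_det _).mp hS.isUnit
  have hSid : IsUnit S⁻¹.det := (Matrix.isUnit_iff_isUnit_det _).mp hSi.isUnit
  have hTpd : (S⁻¹ * B * S⁻¹).PosDef := by
    have := posDef_conj hB hSid
    rwa [hSi.isHermitian.eq] at this
  set T := msqrt (S⁻¹ * B * S⁻¹) with hTdef
  have hT : T.PosDef := msqrt_posDef hTpd
  have hTT : T * T = S⁻¹ * B * S⁻¹ := msqrt_mul_self hTpd.posSemidef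
  have hSS : S * S = A := msqrt_mul_self hA.posSemidef
  have hG : geom A B = S * T * S := rfl
  constructor
  · have := posDef_conj hT hSd
    rw [hS.isHermitian.eq] at this
    exact hG ▸ this
  · rw [hG, ← hSS, Matrix.mul_inv_rev]
    simp only [Matrix.mul_assoc]
    rw [Matrix.mul_nonsing_inv_cancel_left _ _ hSd,
      Matrix.nonsing_inv_mul_cancel_left _ _ hSd,
      show T * (T * S) = (T * T) * S by rw [Matrix.mul_assoc], hTT]
    simp only [Matrix.mul_assoc]
    rw [Matrix.mul_nonsing_inv_cancel_left _ _ hSd,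
      Matrix.nonsing_inv_mul _ hSd, mul_one]

end Aux

/-- For positive definite matrices `A, B`:  `(A+B) ♯ (A⁻¹+B⁻¹)⁻¹ = A ♯ B`. -/
theorem geom_add_inv_add_inv {n : Type*} [Fintype n] [DecidableEq n]
    (A B : Matrix n n ℂ) (hA : A.PosDef) (hB : B.PosDef) :
    geom (A + B) (A⁻¹ + B⁻¹)⁻¹ = geom A B := by
  obtain ⟨hGpd, hGAG⟩ := geom_spec hA hB
  set G := geom A B with hGdef
  have hAd : IsUnit A.det := (Matrix.isUnit_iff_isUnit_det _).mp hA.isUnit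
  have hBd : IsUnit B.det := (Matrix.isUnit_iff_isUnit_det _).mp hB.isUnit
  have hGd : IsUnit G.det := (Matrix.isUnit_iff_isUnit_det _).mp hGpd.isUnit
  have hBinv : B⁻¹ = G⁻¹ * (A * G⁻¹) := by
    rw [← hGAG, Matrix.mul_inv_rev, Matrix.mul_inv_rev,
      Matrix.nonsing_inv_nonsing_inv _ hAd]
  have hGBG : G * B⁻¹ * G = A := by
    rw [hBinv]
    simp only [Matrix.mul_assoc]
    rw [Matrix.mul_nonsing_inv_cancel_left _ _ hGd,
      Matrix.nonsing_inv_mul _ hGd, mul_one]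
  have hGXG : G * (A⁻¹ + B⁻¹) * G = A + B := by
    rw [Matrix.mul_add, Matrix.add_mul, hGAG, hGBG, add_comm]
  have hGMG : G * (A + B)⁻¹ * G = (A⁻¹ + B⁻¹)⁻¹ := by
    rw [← hGXG, Matrix.mul_inv_rev, Matrix.mul_inv_rev]
    simp only [Matrix.mul_assoc]
    rw [Matrix.mul_nonsing_inv_cancel_left _ _ hGd]
    rw [show (A⁻¹ + B⁻¹)⁻¹ * (G⁻¹ * G) = (A⁻¹ + B⁻¹)⁻¹ by
      rw [Matrix.nonsing_inv_mul _ hGd, mul_one]]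
  have hM : (A + B).PosDef := hA.add hB
  set S := msqrt (A + B) with hSdef
  have hS : S.PosDef := msqrt_posDef hM
  have hSi : S⁻¹.PosDef := hS.inv
  have hSd : IsUnit S.det := (Matrix.isUnit_iff_isUnit_det _).mp hS.isUnit
  have hSid : IsUnit S⁻¹.det := (Matrix.isUnit_iff_isUnit_det _).mp hSi.isUnit
  have hSS : S * S = A + B := msqrt_mul_self hM.posSemidef
  have hGp : (S⁻¹ * G * S⁻¹).PosDef := by
    have := posDef_conj hGpd hSid
    rwa [hSi.isHermitian.eq] at this
  have hsq : S⁻¹ * (A⁻¹ + B⁻¹)⁻¹ * S⁻¹ = (S⁻¹ * G * S⁻¹) * (S⁻¹ * G * S⁻¹) := by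
    rw [← hGMG, show (A + B)⁻¹ = S⁻¹ * S⁻¹ by rw [← hSS, Matrix.mul_inv_rev]]
    simp only [Matrix.mul_assoc]
  have hmsq : msqrt (S⁻¹ * (A⁻¹ + B⁻¹)⁻¹ * S⁻¹) = S⁻¹ * G * S⁻¹ :=
    msqrt_eq_of_sq hGp.posSemidef hsq
  show S * msqrt (S⁻¹ * (A⁻¹ + B⁻¹)⁻¹ * S⁻¹) * S = G
  rw [hmsq]
  simp only [Matrix.mul_assoc]
  rw [Matrix.mul_nonsing_inv_cancel_left _ _ hSd,
    Matrix.nonsing_inv_mul _ hSd, mul_one]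
end

section
/- Monotonicity of the resolvent average in the parameter: for positive definite matrices A₁,…,Aₘ, weights λ summing to 1, and 0 ≤ μ ≤ ν, one has R_μ(A,λ) ≤ R_ν(A,λ) in the Loewner order. -/
open Matrix
open scoped ComplexOrder

section Aux

variable {n : Type*} [Fintype n] [DecidableEq n]

lemma real_smul_eq (c : ℝ) (M : Matrix n n ℂ) : c • M = (c : ℂ) • M := by
  ext i j
  simp [Matrix.smul_apply, Complex.real_smul]

lemma psd_smul {M : Matrix n n ℂ} (hM : M.PosSemidef) {c : ℝ} (hc : 0 ≤ c) :
    (c • M).PosSemidef := by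
  rw [real_smul_eq]
  constructor
  · unfold Matrix.IsHermitian
    rw [Matrix.conjTranspose_smul, hM.isHermitian]
    congr 1
    simp [Complex.star_def, Complex.conj_ofReal]
  · intro x
    simpa [Finsupp.mul_sum, mul_left_comm, mul_assoc] using
      mul_nonneg (show (0 : ℂ) ≤ (c : ℂ) by exact_mod_cast hc) (hM.2 x)

lemma pd_smul {M : Matrix n n ℂ} (hM : M.PosDef) {c : ℝ} (hc : 0 < c) :
    (c • M).PosDef := by
  rw [real_smul_eq]
  constructor
  · unfold Matrix.IsHermitian
    rw [Matrix.conjTranspose_smul, hM.isHermitian]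
    congr 1
    simp [Complex.star_def, Complex.conj_ofReal]
  · intro x hx
    simpa [Finsupp.mul_sum, mul_left_comm, mul_assoc] using
      mul_pos (show (0 : ℂ) < (c : ℂ) by exact_mod_cast hc) (hM.2 hx)

lemma psd_sum {ι : Type*} (s : Finset ι) (f : ι → Matrix n n ℂ)
    (h : ∀ i ∈ s, (f i).PosSemidef) : (∑ i ∈ s, f i).PosSemidef :=
  Finset.sum_induction f Matrix.PosSemidef (fun _ _ ha hb => ha.add hb)
    Matrix.PosSemidef.zero h

lemma sum_smul_posDef {m : ℕ} {B : Fin m → Matrix n n ℂ} (hB : ∀ i, (B i).PosDef)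
    {w : Fin m → ℝ} (hw : ∀ i, 0 ≤ w i) (hw1 : ∑ i, w i = 1) :
    (∑ i, w i • B i).PosDef := by
  obtain ⟨j, hj⟩ : ∃ j, 0 < w j := by
    by_contra h
    push_neg at h
    have : ∑ i, w i ≤ 0 := Finset.sum_nonpos fun i _ => h i
    linarith
  rw [← Finset.sum_erase_add _ _ (Finset.mem_univ j)]
  exact Matrix.PosDef.posSemidef_add
    (psd_sum _ _ fun i _ => psd_smul (hB i).posSemidef (hw i))
    (pd_smul (hB j) hj)

lemma key_ineq {B M : Matrix n n ℂ} (hB : B.PosDef) (hM : M.PosDef) :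
    (B⁻¹ + M⁻¹ * B * M⁻¹ - M⁻¹ - M⁻¹).PosSemidef := by
  have hBd : IsUnit B.det := (Matrix.isUnit_iff_isUnit_det _).mp hB.isUnit
  have herm : (B⁻¹ - M⁻¹)ᴴ = B⁻¹ - M⁻¹ :=
    (hB.inv.isHermitian.sub hM.inv.isHermitian)
  have hid : B⁻¹ + M⁻¹ * B * M⁻¹ - M⁻¹ - M⁻¹
      = (B⁻¹ - M⁻¹) * B * (B⁻¹ - M⁻¹)ᴴ := by
    rw [herm]
    have h1 : B⁻¹ * B = 1 := Matrix.nonsing_inv_mul B hBd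
    have h2 : B * B⁻¹ = 1 := Matrix.mul_nonsing_inv B hBd
    have e2 : M⁻¹ * B * B⁻¹ = M⁻¹ := by rw [Matrix.mul_assoc, h2, Matrix.mul_one]
    rw [Matrix.mul_sub, Matrix.sub_mul, Matrix.sub_mul, Matrix.sub_mul, h1, e2]
    simp only [Matrix.one_mul]
    abel
  rw [hid]
  exact hB.posSemidef.mul_mul_conjTranspose_same _

/-- Antitonicity of inverse: if `X ≤ Y` (Loewner) with `X, Y` posdef then `Y⁻¹ ≤ X⁻¹`. -/
lemma inv_anti {X Y : Matrix n n ℂ} (hX : X.PosDef) (hY : Y.PosDef)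
    (h : (Y - X).PosSemidef) : (X⁻¹ - Y⁻¹).PosSemidef := by
  have hYd : IsUnit Y.det := (Matrix.isUnit_iff_isUnit_det _).mp hY.isUnit
  have h1 : Y⁻¹ * Y = 1 := Matrix.nonsing_inv_mul Y hYd
  have hermY : (Y⁻¹)ᴴ = Y⁻¹ := hY.inv.isHermitian
  have h2 : (Y⁻¹ * (Y - X) * Y⁻¹).PosSemidef := by
    have := h.mul_mul_conjTranspose_same Y⁻¹
    rwa [hermY] at this
  have hid : X⁻¹ - Y⁻¹
      = (X⁻¹ + Y⁻¹ * X * Y⁻¹ - Y⁻¹ - Y⁻¹) + Y⁻¹ * (Y - X) * Y⁻¹ := by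
    rw [Matrix.mul_sub, Matrix.sub_mul, show Y⁻¹ * Y * Y⁻¹ = Y⁻¹ by
      rw [h1, Matrix.one_mul]]
    abel
  rw [hid]
  exact (key_ineq hX hY).add h2

/-- AM-HM inequality (convexity of the inverse):
`(∑ wᵢ Bᵢ)⁻¹ ≤ ∑ wᵢ Bᵢ⁻¹`. -/
lemma amhm {m : ℕ} {B : Fin m → Matrix n n ℂ} (hB : ∀ i, (B i).PosDef)
    {w : Fin m → ℝ} (hw : ∀ i, 0 ≤ w i) (hw1 : ∑ i, w i = 1) :
    (∑ i, w i • (B i)⁻¹ - (∑ i, w i • B i)⁻¹).PosSemidef := by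
  set M := ∑ i, w i • B i with hMdef
  have hMpd : M.PosDef := sum_smul_posDef hB hw hw1
  have hMd : IsUnit M.det := (Matrix.isUnit_iff_isUnit_det _).mp hMpd.isUnit
  have h1 : M⁻¹ * M = 1 := Matrix.nonsing_inv_mul M hMd
  have hsum1 : ∑ i, w i • (M⁻¹ : Matrix n n ℂ) = M⁻¹ := by
    rw [← Finset.sum_smul, hw1, one_smul]
  have hsum2 : ∑ i, w i • (M⁻¹ * B i * M⁻¹) = M⁻¹ := by
    have : ∀ i, w i • (M⁻¹ * B i * M⁻¹) = M⁻¹ * (w i • B i) * M⁻¹ := by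
      intro i
      rw [Matrix.mul_smul, Matrix.smul_mul]
    simp_rw [this]
    rw [← Finset.sum_mul, ← Finset.mul_sum, ← hMdef, Matrix.mul_assoc,
      Matrix.mul_nonsing_inv M hMd, Matrix.mul_one]
  have expand : ∑ i, w i • (B i)⁻¹ - M⁻¹
      = ∑ i, w i • ((B i)⁻¹ + M⁻¹ * B i * M⁻¹ - M⁻¹ - M⁻¹) := by
    simp_rw [smul_sub, smul_add]
    rw [Finset.sum_sub_distrib, Finset.sum_sub_distrib, Finset.sum_add_distrib,
      hsum1, hsum2]
    abel
  rw [expand]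
  exact psd_sum _ _ fun i _ => psd_smul (key_ineq (hB i) hMpd) (hw i)

end Aux

/-- The (parametrized) resolvent average `R_μ(A, w) = (∑ᵢ wᵢ (Aᵢ + μI)⁻¹)⁻¹ − μI`
of a family of matrices. -/
noncomputable def resAvg {n : Type*} [Fintype n] [DecidableEq n] {m : ℕ}
    (μ : ℝ) (A : Fin m → Matrix n n ℂ) (w : Fin m → ℝ) : Matrix n n ℂ :=
  (∑ i, w i • (A i + μ • (1 : Matrix n n ℂ))⁻¹)⁻¹ - μ • (1 : Matrix n n ℂ)

/-- Monotonicity of the resolvent average in the parameter: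
for `0 ≤ μ ≤ ν`, `R_μ(A,w) ≤ R_ν(A,w)` in the Loewner order. -/
theorem resAvg_mono_param {n : Type*} [Fintype n] [DecidableEq n] {m : ℕ}
    (A : Fin m → Matrix n n ℂ) (hA : ∀ i, (A i).PosDef)
    (w : Fin m → ℝ) (hw : ∀ i, 0 ≤ w i) (hw1 : ∑ i, w i = 1)
    (μ ν : ℝ) (hμ : 0 ≤ μ) (hμν : μ ≤ ν) :
    (resAvg ν A w - resAvg μ A w).PosSemidef := by
  have hν : 0 ≤ ν := hμ.trans hμν
  set c : ℝ := ν - μ with hcdef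
  have hc : 0 ≤ c := by simp [hcdef]; linarith
  rcases eq_or_lt_of_le hc with hc0 | hcpos
  · -- ν = μ
    have : ν = μ := by simp [hcdef] at hc0; linarith
    subst this
    simpa using Matrix.PosSemidef.zero
  · -- 0 < c
    have hone : (1 : Matrix n n ℂ).PosDef := Matrix.PosDef.one
    have hAμ : ∀ i, (A i + μ • (1 : Matrix n n ℂ)).PosDef := fun i =>
      (hA i).add_posSemidef (psd_smul hone.posSemidef hμ)
    have hAν : ∀ i, (A i + ν • (1 : Matrix n n ℂ)).PosDef := fun i =>
      (hA i).add_posSemidef (psd_smul hone.posSemidef hν)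
    set S : Fin m → Matrix n n ℂ := fun i => (A i + μ • 1)⁻¹ with hSdef
    have hS : ∀ i, (S i).PosDef := fun i => (hAμ i).inv
    set B : Fin m → Matrix n n ℂ := fun i => 1 + c • S i with hBdef
    have hBpd : ∀ i, (B i).PosDef := fun i =>
      hone.add_posSemidef (psd_smul (hS i).posSemidef hc)
    set Tμ : Matrix n n ℂ := ∑ i, w i • S i with hTμdef
    set Tν : Matrix n n ℂ := ∑ i, w i • (A i + ν • (1 : Matrix n n ℂ))⁻¹ with hTνdef
    have hTμpd : Tμ.PosDef := sum_smul_posDef hS hw hw1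
    have hTνpd : Tν.PosDef := sum_smul_posDef (fun i => (hAν i).inv) hw hw1
    -- per-index identity : (A i + ν•1)⁻¹ = c⁻¹ • (1 - (B i)⁻¹)
    have hfactor : ∀ i, A i + ν • (1 : Matrix n n ℂ) = (A i + μ • 1) * B i := by
      intro i
      have hmul : (A i + μ • (1 : Matrix n n ℂ)) * S i = 1 :=
        Matrix.mul_nonsing_inv _ ((Matrix.isUnit_iff_isUnit_det _).mp (hAμ i).isUnit)
      rw [hBdef]
      simp only [Matrix.mul_add, Matrix.mul_one, Matrix.mul_smul, hmul]
      rw [add_assoc, ← add_smul]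
      congr 2
      ring
    have hBinv_mul : ∀ i, (B i)⁻¹ * B i = 1 := fun i =>
      Matrix.nonsing_inv_mul _ ((Matrix.isUnit_iff_isUnit_det _).mp (hBpd i).isUnit)
    have hSeq : ∀ i, S i = c⁻¹ • (B i - 1) := by
      intro i
      rw [hBdef]
      simp [smul_smul, inv_mul_cancel₀ hcpos.ne']
    have hinv_eq : ∀ i, (A i + ν • (1 : Matrix n n ℂ))⁻¹
        = c⁻¹ • (1 - (B i)⁻¹) := by
      intro i
      rw [hfactor i, Matrix.mul_inv_rev]
      show (B i)⁻¹ * S i = _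
      rw [hSeq i, Matrix.mul_smul, Matrix.mul_sub, hBinv_mul i, Matrix.mul_one]
    -- rewrite Tν
    set Q : Matrix n n ℂ := ∑ i, w i • (B i)⁻¹ with hQdef
    have hTνeq : Tν = c⁻¹ • (1 - Q) := by
      rw [hTνdef]
      simp_rw [hinv_eq]
      have : ∀ i, w i • (c⁻¹ • ((1 : Matrix n n ℂ) - (B i)⁻¹))
          = c⁻¹ • (w i • (1 : Matrix n n ℂ) - w i • (B i)⁻¹) := by
        intro i
        rw [smul_comm, smul_sub]
      simp_rw [this]
      rw [← Finset.smul_sum, Finset.sum_sub_distrib, ← Finset.sum_smul, hw1,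
        one_smul, hQdef]
    -- M = ∑ wᵢ Bᵢ = 1 + c • Tμ
    set M : Matrix n n ℂ := ∑ i, w i • B i with hMdef
    have hMeq : M = 1 + c • Tμ := by
      rw [hMdef, hBdef]
      simp_rw [smul_add]
      rw [Finset.sum_add_distrib, ← Finset.sum_smul, hw1, one_smul]
      congr 1
      rw [hTμdef, Finset.smul_sum]
      exact Finset.sum_congr rfl fun i _ => smul_comm _ _ _
    have hMpd : M.PosDef := sum_smul_posDef hBpd hw hw1
    have hMinv_mul : M⁻¹ * M = 1 :=
      Matrix.nonsing_inv_mul _ ((Matrix.isUnit_iff_isUnit_det _).mp hMpd.isUnit)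
    -- U = c⁻¹ • (1 - M⁻¹) = (Tμ⁻¹ + c•1)⁻¹
    set U : Matrix n n ℂ := c⁻¹ • ((1 : Matrix n n ℂ) - M⁻¹) with hUdef
    have hfactor2 : Tμ⁻¹ + c • (1 : Matrix n n ℂ) = Tμ⁻¹ * M := by
      have hmul : Tμ⁻¹ * Tμ = 1 :=
        Matrix.nonsing_inv_mul _ ((Matrix.isUnit_iff_isUnit_det _).mp hTμpd.isUnit)
      rw [hMeq, Matrix.mul_add, Matrix.mul_one, Matrix.mul_smul, hmul]
    have hTμeq : Tμ = c⁻¹ • (M - 1) := by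
      rw [hMeq]
      simp [smul_smul, inv_mul_cancel₀ hcpos.ne']
    have hUeq : (Tμ⁻¹ + c • (1 : Matrix n n ℂ))⁻¹ = U := by
      rw [hfactor2, Matrix.mul_inv_rev,
        Matrix.nonsing_inv_nonsing_inv _
          ((Matrix.isUnit_iff_isUnit_det _).mp hTμpd.isUnit)]
      rw [hUdef]
      conv_lhs => rw [hTμeq]
      rw [Matrix.mul_smul, Matrix.mul_sub, hMinv_mul, Matrix.mul_one]
    have hVpd : (Tμ⁻¹ + c • (1 : Matrix n n ℂ)).PosDef :=
      hTμpd.inv.add_posSemidef (psd_smul hone.posSemidef hc)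
    have hUpd : U.PosDef := by
      rw [← hUeq]
      exact hVpd.inv
    -- Tν ≤ U via AM-HM
    have hle : (U - Tν).PosSemidef := by
      have hkey := amhm hBpd hw hw1
      rw [← hQdef, ← hMdef] at hkey
      have : U - Tν = c⁻¹ • (Q - M⁻¹) := by
        rw [hUdef, hTνeq, ← smul_sub]
        congr 1
        abel
      rw [this]
      exact psd_smul hkey (inv_nonneg.mpr hc)
    -- invert: Tν⁻¹ - U⁻¹ psd
    have hfinal := inv_anti hTνpd hUpd hle
    rw [hUeq.symm, Matrix.nonsing_inv_nonsing_inv _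
      ((Matrix.isUnit_iff_isUnit_det _).mp hVpd.isUnit)] at hfinal
    -- conclude
    have hgoal : resAvg ν A w - resAvg μ A w
        = Tν⁻¹ - (Tμ⁻¹ + c • (1 : Matrix n n ℂ)) := by
      show Tν⁻¹ - ν • 1 - (Tμ⁻¹ - μ • 1) = _
      have hν1 : ν • (1 : Matrix n n ℂ) = μ • 1 + c • 1 := by
        rw [← add_smul]
        congr 1
        rw [hcdef]
        ring
      rw [hν1]
      abel
    rw [hgoal]
    exact hfinal
end

section
/- Sectorial comparison for the harmonic mean: if A₁,…,Aₘ are n×n matrices with numerical range contained in the sector S_α = {z : Re z ≥ 0, |Im z| ≤ tan(α) Re z} for some α ∈ [0,π/2), and λ weights summing to 1, then (∑ᵢ λᵢ (Re Aᵢ)⁻¹)⁻¹ ≤ sec²(α) · Re((∑ᵢ λᵢ Aᵢ⁻¹)⁻¹). -/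
open Matrix
open scoped ComplexOrder

/-- The real part `Re A = (A + Aᴴ)/2` of a matrix. -/
noncomputable def reMat {n : Type*} [Fintype n] [DecidableEq n]
    (A : Matrix n n ℂ) : Matrix n n ℂ :=
  (1 / 2 : ℂ) • (A + Aᴴ)

/-- `A ∈ Π_{n,α}`: the numerical range of `A` is contained in the sector
`S_α = {z : Re z ≥ 0, |Im z| ≤ tan(α) Re z}`, with `Re ⟨Ax,x⟩ > 0` for `x ≠ 0`
(so that `A` is sectorial, in particular accretive and invertible). -/
def InSector {n : Type*} [Fintype n] [DecidableEq n] (α : ℝ) (A : Matrix n n ℂ) : Prop :=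
  ∀ x : n → ℂ, x ≠ 0 →
    0 < (dotProduct (star x) (A *ᵥ x)).re ∧
    |(dotProduct (star x) (A *ᵥ x)).im| ≤ Real.tan α * (dotProduct (star x) (A *ᵥ x)).re

namespace SecProof

variable {n : Type*} [Fintype n] [DecidableEq n]

lemma quad_conjT (A : Matrix n n ℂ) (x : n → ℂ) :
    dotProduct (star x) (Aᴴ *ᵥ x) = star (dotProduct (star x) (A *ᵥ x)) := by
  simp only [dotProduct, mulVec, conjTranspose_apply, star_sum, star_mul', star_star,
    Finset.mul_sum]
  rw [Finset.sum_comm]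
  congr 1; ext i; congr 1; ext j; simp only [Pi.star_apply, star_star]; ring

lemma quad_real {A : Matrix n n ℂ} (hA : A.IsHermitian) (x : n → ℂ) :
    dotProduct (star x) (A *ᵥ x) = ((dotProduct (star x) (A *ᵥ x)).re : ℂ) := by
  have h := quad_conjT A x
  rw [hA.eq] at h
  exact (Complex.conj_eq_iff_re.mp h.symm).symm

lemma quad_comb (M : Matrix n n ℂ) (x y : n → ℂ) (z : ℂ) :
    dotProduct (star (x + z • y)) (M *ᵥ (x + z • y)) =
      dotProduct (star x) (M *ᵥ x) + z * dotProduct (star x) (M *ᵥ y)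
      + star z * dotProduct (star y) (M *ᵥ x)
      + (star z * z) * dotProduct (star y) (M *ᵥ y) := by
  simp only [star_add, star_smul, add_dotProduct, smul_dotProduct, mulVec_add, mulVec_smul,
    dotProduct_add, dotProduct_smul, smul_eq_mul]
  ring

lemma posSemidef_of_re {M : Matrix n n ℂ} (hM : M.IsHermitian)
    (h : ∀ x : n → ℂ, 0 ≤ (dotProduct (star x) (M *ᵥ x)).re) : M.PosSemidef := by
  refine Matrix.PosSemidef.of_dotProduct_mulVec_nonneg hM (fun x => ?_)
  rw [quad_real hM x]
  exact_mod_cast Complex.zero_le_real.mpr (h x)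

/-- The core Cauchy–Schwarz-type estimate. -/
lemma cs_core {H S : Matrix n n ℂ} (hH : H.PosDef) (hS : Sᴴ = -S) {t : ℝ} (ht : 0 ≤ t)
    (hb : ∀ z : n → ℂ, ‖dotProduct (star z) (S *ᵥ z)‖
      ≤ t * (dotProduct (star z) (H *ᵥ z)).re) :
    ((t ^ 2 : ℝ) • H - Sᴴ * H⁻¹ * S).PosSemidef := by
  have hdet : IsUnit H.det := (Matrix.isUnit_iff_isUnit_det _).mp hH.isUnit
  have hHinv : H⁻¹.PosDef := hH.inv
  have hermH : ((t ^ 2 : ℝ) • H).IsHermitian := by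
    rw [Matrix.IsHermitian, conjTranspose_smul, star_trivial, hH.isHermitian.eq]
  have hermS : (Sᴴ * H⁻¹ * S).IsHermitian := isHermitian_conjTranspose_mul_mul S hHinv.isHermitian
  refine posSemidef_of_re (hermH.sub hermS) (fun x => ?_)
  set u : n → ℂ := S *ᵥ x with hu
  set y : n → ℂ := H⁻¹ *ᵥ u with hy
  have hyu : H *ᵥ y = u := by
    rw [hy, mulVec_mulVec, Matrix.mul_nonsing_inv _ hdet, one_mulVec]
  set c : ℝ := (dotProduct (star u) (H⁻¹ *ᵥ u)).re with hc
  set hx : ℝ := (dotProduct (star x) (H *ᵥ x)).re with hhx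
  have hc0 : 0 ≤ c := hHinv.posSemidef.re_dotProduct_nonneg u
  have hx0 : 0 ≤ hx := hH.posSemidef.re_dotProduct_nonneg x
  have hcC : dotProduct (star u) y = (c : ℂ) := by
    rw [hy, hc]; exact quad_real hHinv.isHermitian u
  have hqc' : (Sᴴ * H⁻¹ * S) *ᵥ x = Sᴴ *ᵥ y := by
    rw [hy, hu, mulVec_mulVec, mulVec_mulVec]
  clear_value u y
  clear hc hhx hy
  have hustar : dotProduct (star u) y = dotProduct (star x) (Sᴴ *ᵥ y) := by
    rw [dotProduct_mulVec, ← star_mulVec, hu]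
  have B1 : dotProduct (star x) (S *ᵥ y) = -(c : ℂ) := by
    have h1 : dotProduct (star x) (Sᴴ *ᵥ y) = (c : ℂ) := by rw [← hustar, hcC]
    rw [hS, neg_mulVec, dotProduct_neg] at h1
    linear_combination -h1
  have hyuC : dotProduct (star y) u = (c : ℂ) := by
    have h2 : dotProduct (star u) y = star (dotProduct (star y) u) := star_dotProduct u y
    rw [hcC] at h2
    have h3 := congrArg star h2
    simpa using h3.symm
  have B2 : dotProduct (star y) (S *ᵥ x) = (c : ℂ) := by rw [← hu]; exact hyuC
  have hyHc : dotProduct (star y) (H *ᵥ y) = (c : ℂ) := by rw [hyu]; exact hyuC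
  have hxC : dotProduct (star x) (H *ᵥ x) = (hx : ℂ) := quad_real hH.isHermitian x
  -- the key scalar inequality
  have key : ∀ s : ℝ, 0 ≤ s → 2 * (s * c) ≤ t * (hx + s ^ 2 * c) := by
    intro s hs
    set z : ℂ := (s : ℂ) * Complex.I with hz
    have hzstar : star z = -z := by
      rw [hz, Complex.star_def, _root_.map_mul, Complex.conj_ofReal, Complex.conj_I]
      ring
    have eS1 := quad_comb S x y z
    have eS2 := quad_comb S x y (-z)
    have eH1 := quad_comb H x y z
    have eH2 := quad_comb H x y (-z)
    have hdiff : dotProduct (star (x + z • y)) (S *ᵥ (x + z • y))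
        - dotProduct (star (x + (-z) • y)) (S *ᵥ (x + (-z) • y)) = -4 * z * (c : ℂ) := by
      rw [eS1, eS2, B1, B2, star_neg, hzstar]
      ring
    have habs : ‖dotProduct (star (x + z • y)) (S *ᵥ (x + z • y))
        - dotProduct (star (x + (-z) • y)) (S *ᵥ (x + (-z) • y))‖ = 4 * (s * c) := by
      rw [hdiff, hz]
      rw [show (-4 : ℂ) * ((s : ℂ) * Complex.I) * (c : ℂ)
        = ((-4 * s * c : ℝ) : ℂ) * Complex.I by push_cast; ring]
      rw [norm_mul, Complex.norm_I, Complex.norm_real, Real.norm_eq_abs, mul_one,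
        abs_of_nonpos (by nlinarith)]
      ring
    have hsumC : dotProduct (star (x + z • y)) (H *ᵥ (x + z • y))
        + dotProduct (star (x + (-z) • y)) (H *ᵥ (x + (-z) • y))
        = ((2 * hx + 2 * (s ^ 2 * c) : ℝ) : ℂ) := by
      rw [eH1, eH2, hyHc, hxC, star_neg, hzstar, hz]
      push_cast
      linear_combination (-2 * (s : ℂ) ^ 2 * (c : ℂ)) * Complex.I_sq
    have hsum : (dotProduct (star (x + z • y)) (H *ᵥ (x + z • y))).re
        + (dotProduct (star (x + (-z) • y)) (H *ᵥ (x + (-z) • y))).re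
        = 2 * hx + 2 * (s ^ 2 * c) := by
      have h4 := congrArg Complex.re hsumC
      simpa [Complex.add_re, ← Complex.ofReal_pow] using h4
    have tri : (4 : ℝ) * (s * c) ≤
        ‖dotProduct (star (x + z • y)) (S *ᵥ (x + z • y))‖
        + ‖dotProduct (star (x + (-z) • y)) (S *ᵥ (x + (-z) • y))‖ := by
      rw [← habs]
      exact norm_sub_le _ _
    have b1 := hb (x + z • y)
    have b2 := hb (x + (-z) • y)
    nlinarith [hsum, tri, b1, b2]
  -- conclude `c ≤ t ^ 2 * hx`
  have hfin : c ≤ t ^ 2 * hx := by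
    rcases eq_or_lt_of_le ht with h0 | hpos
    · have k1 := key 1 zero_le_one
      nlinarith
    · have k1 := key t⁻¹ (le_of_lt (by positivity))
      have e : t * (hx + t⁻¹ ^ 2 * c) = t * hx + t⁻¹ * c := by
        field_simp
      rw [e] at k1
      have h7 : t⁻¹ * c ≤ t * hx := by linarith
      have h8 := mul_le_mul_of_nonneg_left h7 (le_of_lt hpos)
      have h9 : t * (t⁻¹ * c) = c := by field_simp
      have h10 : t * (t * hx) = t ^ 2 * hx := by ring
      linarith
  have expand : dotProduct (star x) (((t ^ 2 : ℝ) • H - Sᴴ * H⁻¹ * S) *ᵥ x)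
      = ((t ^ 2 * hx - c : ℝ) : ℂ) := by
    rw [sub_mulVec, dotProduct_sub, hqc', ← hustar, hcC, smul_mulVec, dotProduct_smul,
      hxC, Complex.real_smul]
    push_cast
    ring
  rw [expand, Complex.ofReal_re]
  linarith

lemma herm_pair {M : Matrix n n ℂ} (hM : M.IsHermitian) (a b : n → ℂ) :
    dotProduct (star a) (M *ᵥ b) = star (dotProduct (star b) (M *ᵥ a)) := by
  rw [star_dotProduct, star_mulVec, ← dotProduct_mulVec, hM.eq]

lemma quad_smul_real (r : ℝ) (M : Matrix n n ℂ) (x : n → ℂ) :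
    dotProduct (star x) ((r • M) *ᵥ x) = (r : ℂ) * dotProduct (star x) (M *ᵥ x) := by
  rw [smul_mulVec, dotProduct_smul, Complex.real_smul]

lemma quad_sum {ι : Type*} (s : Finset ι) (f : ι → Matrix n n ℂ) (x : n → ℂ) :
    dotProduct (star x) ((∑ i ∈ s, f i) *ᵥ x) = ∑ i ∈ s, dotProduct (star x) (f i *ᵥ x) := by
  induction s using Finset.cons_induction with
  | empty => simp
  | cons a s ha ih => rw [Finset.sum_cons, Finset.sum_cons, add_mulVec, dotProduct_add, ih]

lemma quad_reMat (A : Matrix n n ℂ) (x : n → ℂ) :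
    dotProduct (star x) (reMat A *ᵥ x) = ((dotProduct (star x) (A *ᵥ x)).re : ℂ) := by
  unfold reMat
  rw [smul_mulVec, dotProduct_smul, add_mulVec, dotProduct_add, quad_conjT]
  rw [show (star (dotProduct (star x) (A *ᵥ x)))
    = (starRingEnd ℂ) (dotProduct (star x) (A *ᵥ x)) from rfl]
  rw [Complex.add_conj, smul_eq_mul]
  push_cast
  ring

lemma posDef_of_re {M : Matrix n n ℂ} (hM : M.IsHermitian)
    (h : ∀ x : n → ℂ, x ≠ 0 → 0 < (dotProduct (star x) (M *ᵥ x)).re) : M.PosDef := by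
  refine Matrix.PosDef.of_dotProduct_mulVec_pos hM (fun x hx => ?_)
  rw [quad_real hM x]
  exact_mod_cast Complex.zero_lt_real.mpr (h x hx)

lemma reMat_isHermitian (A : Matrix n n ℂ) : (reMat A).IsHermitian := by
  unfold reMat
  rw [Matrix.IsHermitian, conjTranspose_smul, conjTranspose_add, conjTranspose_conjTranspose]
  simp [add_comm]

lemma reMat_posDef {α : ℝ} {A : Matrix n n ℂ} (hA : InSector α A) : (reMat A).PosDef := by
  refine posDef_of_re (reMat_isHermitian A) (fun x hx => ?_)
  rw [quad_reMat]
  exact_mod_cast (hA x hx).1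

lemma sector_isUnit {α : ℝ} {A : Matrix n n ℂ} (hA : InSector α A) : IsUnit A.det := by
  rw [isUnit_iff_ne_zero]
  intro hdet
  obtain ⟨v, hv, hAv⟩ := Matrix.exists_mulVec_eq_zero_iff.mpr hdet
  have h1 := (hA v hv).1
  rw [hAv] at h1
  simp at h1

lemma inv_inSector {α : ℝ} {A : Matrix n n ℂ} (hA : InSector α A) : InSector α A⁻¹ := by
  intro x hx
  have hdet := sector_isUnit hA
  set y : n → ℂ := A⁻¹ *ᵥ x with hy
  have hAy : A *ᵥ y = x := by
    rw [hy, mulVec_mulVec, Matrix.mul_nonsing_inv _ hdet, one_mulVec]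
  have hy0 : y ≠ 0 := by
    intro h0
    exact hx (by rw [← hAy, h0, mulVec_zero])
  have hq : dotProduct (star x) (A⁻¹ *ᵥ x) = star (dotProduct (star y) (A *ᵥ y)) := by
    rw [← hy]
    calc dotProduct (star x) y = star (dotProduct (star y) x) := star_dotProduct x y
    _ = star (dotProduct (star y) (A *ᵥ y)) := by rw [hAy]
  rw [hq]
  obtain ⟨h1, h2⟩ := hA y hy0
  constructor
  · simpa using h1
  · simpa [abs_neg] using h2

lemma sum_inSector {α : ℝ} {m : ℕ} {A : Fin m → Matrix n n ℂ} (hA : ∀ i, InSector α (A i))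
    (w : Fin m → ℝ) (hw : ∀ i, 0 ≤ w i) (hj : ∃ j, 0 < w j) :
    InSector α (∑ i, w i • A i) := by
  intro x hx
  have hq : dotProduct (star x) ((∑ i, w i • A i) *ᵥ x)
      = ∑ i, (w i : ℂ) * dotProduct (star x) (A i *ᵥ x) := by
    rw [quad_sum]
    exact Finset.sum_congr rfl fun i _ => quad_smul_real (w i) (A i) x
  have hre : (dotProduct (star x) ((∑ i, w i • A i) *ᵥ x)).re
      = ∑ i, w i * (dotProduct (star x) (A i *ᵥ x)).re := by
    rw [hq, Complex.re_sum]
    exact Finset.sum_congr rfl fun i _ => by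
      simp [Complex.mul_re, Complex.ofReal_re, Complex.ofReal_im]
  have him : (dotProduct (star x) ((∑ i, w i • A i) *ᵥ x)).im
      = ∑ i, w i * (dotProduct (star x) (A i *ᵥ x)).im := by
    rw [hq, Complex.im_sum]
    exact Finset.sum_congr rfl fun i _ => by
      simp [Complex.mul_im, Complex.ofReal_re, Complex.ofReal_im]
  constructor
  · rw [hre]
    obtain ⟨j, hjpos⟩ := hj
    refine Finset.sum_pos' (fun i _ => mul_nonneg (hw i) (le_of_lt (hA i x hx).1))
      ⟨j, Finset.mem_univ j, mul_pos hjpos (hA j x hx).1⟩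
  · rw [hre, him, Finset.mul_sum]
    calc |∑ i, w i * (dotProduct (star x) (A i *ᵥ x)).im|
        ≤ ∑ i, |w i * (dotProduct (star x) (A i *ᵥ x)).im| := Finset.abs_sum_le_sum_abs _ _
      _ ≤ ∑ i, Real.tan α * (w i * (dotProduct (star x) (A i *ᵥ x)).re) := by
          refine Finset.sum_le_sum fun i _ => ?_
          rw [abs_mul, abs_of_nonneg (hw i)]
          calc w i * |(dotProduct (star x) (A i *ᵥ x)).im|
              ≤ w i * (Real.tan α * (dotProduct (star x) (A i *ᵥ x)).re) :=
                mul_le_mul_of_nonneg_left (hA i x hx).2 (hw i)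
            _ = Real.tan α * (w i * (dotProduct (star x) (A i *ᵥ x)).re) := by ring

lemma smul_posSemidef {r : ℝ} (hr : 0 ≤ r) {M : Matrix n n ℂ} (hM : M.PosSemidef) :
    (r • M).PosSemidef := by
  refine posSemidef_of_re ?_ (fun x => ?_)
  · rw [Matrix.IsHermitian, conjTranspose_smul, star_trivial, hM.1.eq]
  · rw [quad_smul_real, Complex.mul_re, Complex.ofReal_re, Complex.ofReal_im]
    simp only [zero_mul, sub_zero]
    exact mul_nonneg hr (hM.re_dotProduct_nonneg x)

lemma posSemidef_sum {ι : Type*} (s : Finset ι) (f : ι → Matrix n n ℂ)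
    (h : ∀ i ∈ s, (f i).PosSemidef) : (∑ i ∈ s, f i).PosSemidef := by
  induction s using Finset.cons_induction with
  | empty => simpa using Matrix.PosSemidef.zero
  | cons a s ha ih =>
      rw [Finset.sum_cons]
      exact (h a (Finset.mem_cons_self a s)).add (ih fun i hi => h i (Finset.mem_cons_of_mem hi))

lemma reMat_smul_real (r : ℝ) (A : Matrix n n ℂ) : reMat (r • A) = r • reMat A := by
  unfold reMat
  rw [conjTranspose_smul, star_trivial, ← smul_add, smul_comm]

lemma reMat_sum {ι : Type*} (s : Finset ι) (f : ι → Matrix n n ℂ) :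
    reMat (∑ i ∈ s, f i) = ∑ i ∈ s, reMat (f i) := by
  unfold reMat
  rw [conjTranspose_sum, ← Finset.sum_add_distrib, Finset.smul_sum]

lemma reMat_inv {A : Matrix n n ℂ} (hdet : IsUnit A.det) :
    reMat A⁻¹ = A⁻¹ * reMat A * (A⁻¹)ᴴ := by
  have hdetH : IsUnit Aᴴ.det := by
    rw [Matrix.det_conjTranspose]
    exact hdet.star
  unfold reMat
  rw [Matrix.mul_smul, Matrix.smul_mul]
  congr 1
  rw [Matrix.mul_add, Matrix.add_mul, Matrix.conjTranspose_nonsing_inv,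
    Matrix.nonsing_inv_mul _ hdet, Matrix.one_mul, Matrix.mul_assoc,
    Matrix.mul_nonsing_inv _ hdetH, Matrix.mul_one]
  rw [add_comm]

lemma sandwich {A M : Matrix n n ℂ} (hdet : IsUnit A.det) :
    A⁻¹ * (A * M * Aᴴ) * (A⁻¹)ᴴ = M := by
  have hdetH : IsUnit Aᴴ.det := by
    rw [Matrix.det_conjTranspose]
    exact hdet.star
  rw [Matrix.conjTranspose_nonsing_inv, ← Matrix.mul_assoc, ← Matrix.mul_assoc,
    Matrix.nonsing_inv_mul _ hdet, Matrix.one_mul, Matrix.mul_assoc,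
    Matrix.mul_nonsing_inv _ hdetH, Matrix.mul_one]

lemma key_main {α : ℝ} {A : Matrix n n ℂ} (hA : InSector α A) (ht : 0 ≤ Real.tan α) :
    ((reMat A)⁻¹ - reMat A⁻¹).PosSemidef ∧
    (((Real.tan α ^ 2 + 1 : ℝ)) • reMat A⁻¹ - (reMat A)⁻¹).PosSemidef := by
  set t := Real.tan α with htdef
  set H := reMat A with hHdef
  have hH : H.PosDef := reMat_posDef hA
  have hdetH : IsUnit H.det := (Matrix.isUnit_iff_isUnit_det _).mp hH.isUnit
  have hdetA : IsUnit A.det := sector_isUnit hA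
  set S : Matrix n n ℂ := A - H with hSdef
  have h2H : A + Aᴴ = H + H := by
    rw [hHdef]
    unfold reMat
    module
  have hS : Sᴴ = -S := by
    rw [hSdef, conjTranspose_sub, hH.isHermitian.eq, neg_sub]
    rw [sub_eq_sub_iff_add_eq_add, add_comm]
    exact h2H
  have hb : ∀ z : n → ℂ, ‖dotProduct (star z) (S *ᵥ z)‖
      ≤ t * (dotProduct (star z) (H *ᵥ z)).re := by
    intro z
    have hqS : dotProduct (star z) (S *ᵥ z)
        = dotProduct (star z) (A *ᵥ z) - ((dotProduct (star z) (A *ᵥ z)).re : ℂ) := by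
      rw [hSdef, sub_mulVec, dotProduct_sub, hHdef, quad_reMat]
    have hqH : (dotProduct (star z) (H *ᵥ z)).re = (dotProduct (star z) (A *ᵥ z)).re := by
      rw [hHdef, quad_reMat, Complex.ofReal_re]
    rw [hqS, hqH]
    have himdecomp : dotProduct (star z) (A *ᵥ z) - ((dotProduct (star z) (A *ᵥ z)).re : ℂ)
        = ((dotProduct (star z) (A *ᵥ z)).im : ℂ) * Complex.I := by
      simp [Complex.ext_iff]
    rw [himdecomp, norm_mul, Complex.norm_real, Real.norm_eq_abs, Complex.norm_I, mul_one]
    rcases eq_or_ne z 0 with rfl | hz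
    · simp
    · exact (hA z hz).2
  have cs := cs_core hH hS ht hb
  have hAH : A * H⁻¹ * Aᴴ = H - S * H⁻¹ * S := by
    have hAeq : A = H + S := by rw [hSdef]; abel
    have hAHeq : Aᴴ = H - S := by
      rw [hAeq, conjTranspose_add, hH.isHermitian.eq, hS]
      abel
    rw [hAHeq, hAeq, Matrix.add_mul, Matrix.mul_nonsing_inv _ hdetH]
    rw [Matrix.add_mul, Matrix.one_mul, Matrix.mul_sub, Matrix.mul_sub]
    rw [Matrix.mul_assoc S H⁻¹ H, Matrix.nonsing_inv_mul _ hdetH, Matrix.mul_one]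
    abel
  have hS2 : Sᴴ * H⁻¹ * S = A * H⁻¹ * Aᴴ - H := by
    rw [hS, Matrix.neg_mul, Matrix.neg_mul, hAH]
    abel
  have hrem : A⁻¹ * H * (A⁻¹)ᴴ = reMat A⁻¹ := (reMat_inv hdetA).symm
  have hsand : A⁻¹ * (A * H⁻¹ * Aᴴ) * (A⁻¹)ᴴ = H⁻¹ := sandwich hdetA
  constructor
  · have hid : H⁻¹ - reMat A⁻¹ = A⁻¹ * (Sᴴ * H⁻¹ * S) * (A⁻¹)ᴴ := by
      rw [hS2, Matrix.mul_sub, Matrix.sub_mul, hsand, hrem]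
    rw [hid]
    exact (hH.inv.posSemidef.conjTranspose_mul_mul_same S).mul_mul_conjTranspose_same A⁻¹
  · have hid2 : ((t ^ 2 + 1 : ℝ)) • reMat A⁻¹ - H⁻¹
        = A⁻¹ * ((t ^ 2 : ℝ) • H - Sᴴ * H⁻¹ * S) * (A⁻¹)ᴴ := by
      have e1 : (t ^ 2 : ℝ) • H - Sᴴ * H⁻¹ * S = ((t ^ 2 + 1 : ℝ)) • H - A * H⁻¹ * Aᴴ := by
        rw [hS2, add_smul, one_smul]
        abel
      rw [e1, Matrix.mul_sub, Matrix.sub_mul, hsand, Matrix.mul_smul, Matrix.smul_mul, hrem]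
    rw [hid2]
    exact cs.mul_mul_conjTranspose_same A⁻¹

lemma inv_sub_inv_posSemidef {H K : Matrix n n ℂ} (hH : H.PosDef) (hK : K.PosDef)
    (hle : (K - H).PosSemidef) : (H⁻¹ - K⁻¹).PosSemidef := by
  have hdetH : IsUnit H.det := (Matrix.isUnit_iff_isUnit_det _).mp hH.isUnit
  have hdetK : IsUnit K.det := (Matrix.isUnit_iff_isUnit_det _).mp hK.isUnit
  refine posSemidef_of_re (hH.inv.isHermitian.sub hK.inv.isHermitian) (fun x => ?_)
  set a : n → ℂ := H⁻¹ *ᵥ x with ha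
  set b : n → ℂ := K⁻¹ *ᵥ x with hb
  have hxa : H *ᵥ a = x := by
    rw [ha, mulVec_mulVec, Matrix.mul_nonsing_inv _ hdetH, one_mulVec]
  have hxb : K *ᵥ b = x := by
    rw [hb, mulVec_mulVec, Matrix.mul_nonsing_inv _ hdetK, one_mulVec]
  set γ : ℝ := (dotProduct (star x) b).re with hγ
  -- expansion of the quadratic form of H at a - b
  have hcomb := quad_comb H a b (-1)
  have hab : a + (-1 : ℂ) • b = a - b := by
    funext i
    simp [sub_eq_add_neg]
  rw [hab] at hcomb
  have hnn : 0 ≤ (dotProduct (star (a - b)) (H *ᵥ (a - b))).re :=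
    hH.posSemidef.re_dotProduct_nonneg _
  rw [hcomb] at hnn
  have hba : dotProduct (star b) (H *ᵥ a) = dotProduct (star b) x := by rw [hxa]
  have habH : dotProduct (star a) (H *ᵥ b) = star (dotProduct (star b) x) := by
    rw [herm_pair hH.isHermitian a b, hba]
  have hbx : dotProduct (star b) x = star (dotProduct (star x) b) := star_dotProduct b x
  have haH : (dotProduct (star a) (H *ᵥ a)).re = (dotProduct (star x) a).re := by
    rw [hxa]
    have := star_dotProduct a x
    rw [this]
    simp [Complex.star_def]
  have hbK : (dotProduct (star b) (K *ᵥ b)).re = γ := by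
    rw [hxb, hγ, hbx]
    simp [Complex.star_def]
  have hbHb : (dotProduct (star b) (H *ᵥ b)).re ≤ γ := by
    have h0 := hle.re_dotProduct_nonneg b
    rw [sub_mulVec, dotProduct_sub] at h0
    simp only [map_sub, RCLike.re_to_complex] at h0
    linarith [hbK]
  have hmid : ((-1 : ℂ) * dotProduct (star a) (H *ᵥ b)
      + star (-1 : ℂ) * dotProduct (star b) (H *ᵥ a)).re = -(2 * γ) := by
    rw [habH, hba, hbx]
    simp [Complex.star_def, Complex.add_re, Complex.neg_re]
    ring
  -- put together
  have hexp : (dotProduct (star a) (H *ᵥ a)).re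
      - 2 * γ + (dotProduct (star b) (H *ᵥ b)).re ≥ 0 := by
    have : star (-1 : ℂ) * (-1 : ℂ) = 1 := by simp
    rw [this, one_mul] at hnn
    simp only [Complex.add_re] at hnn
    have hmid' := hmid
    simp only [Complex.add_re] at hmid'
    linarith [hnn, hmid']
  have hgoal : (dotProduct (star x) ((H⁻¹ - K⁻¹) *ᵥ x)).re
      = (dotProduct (star x) a).re - γ := by
    rw [sub_mulVec, dotProduct_sub, Complex.sub_re, ← ha, ← hb, hγ]
  rw [hgoal]
  have := hbHb
  linarith [hexp, haH, hbHb]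

end SecProof

open SecProof

/-- Sectorial comparison for the weighted harmonic mean:
`(∑ᵢ wᵢ (Re Aᵢ)⁻¹)⁻¹ ≤ sec²(α) · Re((∑ᵢ wᵢ Aᵢ⁻¹)⁻¹)` (Loewner order). -/
theorem harmonic_re_le_sec_sq_re_harmonic {n : Type*} [Fintype n] [DecidableEq n] {m : ℕ}
    (α : ℝ) (hα0 : 0 ≤ α) (hα : α < Real.pi / 2)
    (A : Fin m → Matrix n n ℂ) (hA : ∀ i, InSector α (A i))
    (w : Fin m → ℝ) (hw : ∀ i, 0 ≤ w i) (hw1 : ∑ i, w i = 1) :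
    ((((Real.cos α) ^ 2)⁻¹ : ℝ) • reMat (∑ i, w i • (A i)⁻¹)⁻¹
      - (∑ i, w i • (reMat (A i))⁻¹)⁻¹).PosSemidef := by

  set t := Real.tan α with htdef
  have hcos : 0 < Real.cos α := Real.cos_pos_of_mem_Ioo
    ⟨by linarith [Real.pi_pos], hα⟩
  have ht : 0 ≤ t := Real.tan_nonneg_of_nonneg_of_le_pi_div_two hα0 hα.le
  have hsec : ((Real.cos α) ^ 2)⁻¹ = t ^ 2 + 1 := by
    rw [← Real.inv_one_add_tan_sq (ne_of_gt hcos), inv_inv, htdef, add_comm]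
  have hj : ∃ j, 0 < w j := by
    by_contra hcon
    push_neg at hcon
    have : ∑ i, w i = 0 := Finset.sum_eq_zero fun i _ => le_antisymm (hcon i) (hw i)
    rw [hw1] at this
    norm_num at this
  set B : Matrix n n ℂ := ∑ i, w i • (A i)⁻¹ with hBdef
  have hB : InSector α B := sum_inSector (fun i => inv_inSector (hA i)) w hw hj
  have hRB : (reMat B).PosDef := reMat_posDef hB
  set C : Matrix n n ℂ := ∑ i, w i • (reMat (A i))⁻¹ with hCdef
  have hC : C.PosDef := by
    refine posDef_of_re ?_ (fun x hx => ?_)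
    · rw [hCdef, Matrix.IsHermitian, conjTranspose_sum]
      refine Finset.sum_congr rfl fun i _ => ?_
      rw [conjTranspose_smul, star_trivial, ((reMat_posDef (hA i)).inv.isHermitian).eq]
    · rw [hCdef, quad_sum, Complex.re_sum]
      obtain ⟨j, hjpos⟩ := hj
      have hterm : ∀ i, (dotProduct (star x) ((w i • (reMat (A i))⁻¹) *ᵥ x)).re
          = w i * (dotProduct (star x) ((reMat (A i))⁻¹ *ᵥ x)).re := by
        intro i
        rw [quad_smul_real, Complex.mul_re, Complex.ofReal_re, Complex.ofReal_im]
        simp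
      refine Finset.sum_pos' (fun i _ => ?_) ⟨j, Finset.mem_univ j, ?_⟩
      · rw [hterm i]
        exact mul_nonneg (hw i) ((reMat_posDef (hA i)).inv.posSemidef.re_dotProduct_nonneg x)
      · rw [hterm j]
        exact mul_pos hjpos ((reMat_posDef (hA j)).inv.re_dotProduct_pos hx)
  have step1 : (C - reMat B).PosSemidef := by
    have hRBsum : reMat B = ∑ i, w i • reMat ((A i)⁻¹) := by
      rw [hBdef, reMat_sum]
      exact Finset.sum_congr rfl fun i _ => reMat_smul_real (w i) ((A i)⁻¹)
    rw [hCdef, hRBsum, ← Finset.sum_sub_distrib]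
    refine posSemidef_sum _ _ fun i _ => ?_
    rw [← smul_sub]
    exact smul_posSemidef (hw i) (key_main (hA i) ht).1
  have step2 : ((reMat B)⁻¹ - C⁻¹).PosSemidef := inv_sub_inv_posSemidef hRB hC step1
  have step3 : (((t ^ 2 + 1 : ℝ)) • reMat B⁻¹ - (reMat B)⁻¹).PosSemidef :=
    (key_main hB ht).2
  rw [hsec, ← sub_add_sub_cancel (((t ^ 2 + 1 : ℝ)) • reMat B⁻¹) ((reMat B)⁻¹) (C⁻¹)]
  exact step3.add step2
end

section
/- For sectorial matrices A₁,…,Aₘ with numerical ranges in S_α, weights λ summing to 1, and μ ≥ 0, letting γ = arctan(tan α/(1+μ)): R_μ(Re A, λ) + μI ≤ sec²(γ) (Re R_μ(A,λ) + μI), where R_μ(A,λ) = (∑ᵢ λᵢ(Aᵢ+μI)⁻¹)⁻¹ − μI and Re A = (Re A₁,…,Re Aₘ). -/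
open Matrix
open scoped ComplexOrder

namespace SectorAux

variable {n : Type*} [Fintype n] [DecidableEq n]

/-- real quadratic form -/
noncomputable def qf (M : Matrix n n ℂ) (x : n → ℂ) : ℝ :=
  (dotProduct (star x) (M *ᵥ x)).re

/-- accretive -/
def Acc (M : Matrix n n ℂ) : Prop := ∀ x : n → ℂ, x ≠ 0 → 0 < qf M x

lemma re_dot_swap (a b : n → ℂ) : (dotProduct (star a) b).re = (dotProduct (star b) a).re := by
  rw [star_dotProduct]
  exact Complex.conj_re _

lemma dot_conjTranspose_re (M : Matrix n n ℂ) (x : n → ℂ) :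
    (dotProduct (star x) (Mᴴ *ᵥ x)).re = (dotProduct (star x) (M *ᵥ x)).re := by
  rw [dotProduct_mulVec, ← star_mulVec]
  exact re_dot_swap _ _

lemma qf_reMat (M : Matrix n n ℂ) (x : n → ℂ) : qf (reMat M) x = qf M x := by
  unfold qf reMat
  rw [smul_mulVec, dotProduct_smul, add_mulVec, dotProduct_add]
  have := dot_conjTranspose_re M x
  simp only [smul_eq_mul, Complex.mul_re, Complex.add_re]
  simp [this]
  ring

lemma qf_add (M N : Matrix n n ℂ) (x : n → ℂ) : qf (M + N) x = qf M x + qf N x := by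
  unfold qf
  rw [add_mulVec, dotProduct_add, Complex.add_re]

lemma qf_smul_real (c : ℝ) (M : Matrix n n ℂ) (x : n → ℂ) : qf (c • M) x = c * qf M x := by
  unfold qf
  rw [smul_mulVec, dotProduct_smul, Complex.real_smul, Complex.mul_re]
  simp

lemma qf_sum {ι : Type*} (s : Finset ι) (M : ι → Matrix n n ℂ) (x : n → ℂ) :
    qf (∑ i ∈ s, M i) x = ∑ i ∈ s, qf (M i) x := by
  classical
  induction s using Finset.cons_induction with
  | empty => simp [qf]
  | cons i s hi ih => rw [Finset.sum_cons, Finset.sum_cons, qf_add, ih]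

lemma re_star_dot_self_nonneg (x : n → ℂ) : 0 ≤ (dotProduct (star x) x).re := by
  unfold dotProduct
  rw [Complex.re_sum]
  refine Finset.sum_nonneg fun i _ => ?_
  simp only [Pi.star_apply, Complex.mul_re, Complex.star_def, Complex.conj_re, Complex.conj_im]
  nlinarith [sq_nonneg (x i).re, sq_nonneg (x i).im]

lemma qf_smul_one (μ : ℝ) (x : n → ℂ) : qf (μ • (1 : Matrix n n ℂ)) x = μ * (dotProduct (star x) x).re := by
  unfold qf
  rw [smul_mulVec, one_mulVec, dotProduct_smul, Complex.real_smul, Complex.mul_re]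
  simp

lemma Acc.qf_nonneg {M : Matrix n n ℂ} (hM : Acc M) (x : n → ℂ) : 0 ≤ qf M x := by
  by_cases hx : x = 0
  · simp [hx, qf]
  · exact (hM x hx).le

lemma Acc.det_ne_zero {M : Matrix n n ℂ} (hM : Acc M) : M.det ≠ 0 := by
  intro h
  obtain ⟨v, hv, hMv⟩ := (Matrix.exists_mulVec_eq_zero_iff).2 h
  have := hM v hv
  rw [qf, hMv] at this
  simp at this

lemma Acc.isUnit_det {M : Matrix n n ℂ} (hM : Acc M) : IsUnit M.det :=
  isUnit_iff_ne_zero.2 hM.det_ne_zero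

lemma Acc.mulVec_inv_cancel {M : Matrix n n ℂ} (hM : Acc M) (x : n → ℂ) :
    M *ᵥ (M⁻¹ *ᵥ x) = x := by
  rw [mulVec_mulVec, Matrix.mul_nonsing_inv M hM.isUnit_det, one_mulVec]

lemma Acc.inv_mulVec_cancel {M : Matrix n n ℂ} (hM : Acc M) (x : n → ℂ) :
    M⁻¹ *ᵥ (M *ᵥ x) = x := by
  rw [mulVec_mulVec, Matrix.nonsing_inv_mul M hM.isUnit_det, one_mulVec]

lemma star_mulVec_dot_re (M : Matrix n n ℂ) (z : n → ℂ) :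
    (dotProduct (star (M *ᵥ z)) z).re = qf M z := by
  rw [star_mulVec, ← dotProduct_mulVec]
  exact dot_conjTranspose_re M z

lemma qf_inv_eq {M : Matrix n n ℂ} (hM : Acc M) (x : n → ℂ) :
    qf M⁻¹ x = qf M (M⁻¹ *ᵥ x) := by
  have h1 : star x = star (M *ᵥ (M⁻¹ *ᵥ x)) := by rw [hM.mulVec_inv_cancel]
  rw [qf, h1, star_mulVec_dot_re]

lemma Acc.inv {M : Matrix n n ℂ} (hM : Acc M) : Acc M⁻¹ := by
  intro x hx
  rw [qf_inv_eq hM]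
  apply hM
  intro h
  apply hx
  have := congrArg (M *ᵥ ·) h
  simpa [hM.mulVec_inv_cancel] using this

/-- Core Cauchy–Schwarz/AM-GM inequality: `2 Re⟨u, v⟩ ≤ ⟨u, H⁻¹u⟩ + ⟨v, Hv⟩`. -/
lemma two_re_dot_le {H : Matrix n n ℂ} (hH : H.IsHermitian) (hA : Acc H) (u v : n → ℂ) :
    2 * (dotProduct (star u) v).re ≤ qf H⁻¹ u + qf H v := by
  have h0 : 0 ≤ qf H⁻¹ (u - H *ᵥ v) := hA.inv.qf_nonneg _
  have hexp : dotProduct (star (u - H *ᵥ v)) (H⁻¹ *ᵥ (u - H *ᵥ v))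
      = dotProduct (star u) (H⁻¹ *ᵥ u) - dotProduct (star u) v
        - dotProduct (star v) u + dotProduct (star v) (H *ᵥ v) := by
    have hinv : H⁻¹ *ᵥ (H *ᵥ v) = v := hA.inv_mulVec_cancel v
    have hsHv : star (H *ᵥ v) = star v ᵥ* H := by
      rw [star_mulVec, hH.eq]
    rw [mulVec_sub, hinv, star_sub, sub_dotProduct, dotProduct_sub, dotProduct_sub,
      hsHv]
    have h3 : dotProduct (star v ᵥ* H) (H⁻¹ *ᵥ u) = dotProduct (star v) u := by
      rw [← dotProduct_mulVec, mulVec_mulVec, Matrix.mul_nonsing_inv H hA.isUnit_det,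
        one_mulVec]
    have h4 : dotProduct (star v ᵥ* H) v = dotProduct (star v) (H *ᵥ v) := by
      rw [← dotProduct_mulVec]
    rw [h3, h4]
    ring
  have := h0
  unfold qf at this ⊢
  rw [hexp] at this
  have hswap : (dotProduct (star v) u).re = (dotProduct (star u) v).re := re_dot_swap v u
  simp only [Complex.sub_re, Complex.add_re] at this
  linarith

/-- The main quadratic form inequality. -/
lemma main_ineq {m : ℕ} (B H : Fin m → Matrix n n ℂ)
    (hB : ∀ i, Acc (B i)) (hHerm : ∀ i, (H i).IsHermitian)
    (hqf : ∀ i z, qf (H i) z = qf (B i) z)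
    (w : Fin m → ℝ) (hw : ∀ i, 0 ≤ w i) (hex : ∃ i, 0 < w i)
    (C D : Matrix n n ℂ) (hC : C = ∑ i, w i • (B i)⁻¹) (hD : D = ∑ i, w i • (H i)⁻¹)
    (x : n → ℂ) :
    qf D⁻¹ x ≤ qf C⁻¹ x ∧ 0 ≤ qf C⁻¹ x := by
  have hAccH : ∀ i, Acc (H i) := fun i z hz => by rw [hqf]; exact hB i z hz
  have hAccC : Acc C := by
    intro z hz
    rw [hC, qf]
    have : qf (∑ i, w i • (B i)⁻¹) z = ∑ i, w i * qf (B i)⁻¹ z := by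
      rw [qf_sum]
      exact Finset.sum_congr rfl fun i _ => qf_smul_real _ _ _
    rw [← qf, this]
    obtain ⟨j, hj⟩ := hex
    refine Finset.sum_pos' (fun i _ => mul_nonneg (hw i) ((hB i).inv.qf_nonneg z)) ⟨j, Finset.mem_univ j, ?_⟩
    exact mul_pos hj ((hB j).inv z hz)
  have hAccD : Acc D := by
    intro z hz
    rw [hD, qf]
    have : qf (∑ i, w i • (H i)⁻¹) z = ∑ i, w i * qf (H i)⁻¹ z := by
      rw [qf_sum]
      exact Finset.sum_congr rfl fun i _ => qf_smul_real _ _ _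
    rw [← qf, this]
    obtain ⟨j, hj⟩ := hex
    refine Finset.sum_pos' (fun i _ => mul_nonneg (hw i) ((hAccH i).inv.qf_nonneg z)) ⟨j, Finset.mem_univ j, ?_⟩
    exact mul_pos hj ((hAccH j).inv z hz)
  set y := C⁻¹ *ᵥ x with hy
  set u := D⁻¹ *ᵥ x with hu
  set v := fun i => (B i)⁻¹ *ᵥ y with hv
  have hCy : C *ᵥ y = x := hAccC.mulVec_inv_cancel x
  have hDu : D *ᵥ u = x := hAccD.mulVec_inv_cancel x
  -- sum of v's
  have hsumv : ∑ i, w i • v i = x := by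
    rw [← hCy, hC]
    have : (∑ i, w i • (B i)⁻¹) *ᵥ y = ∑ i, (w i • (B i)⁻¹) *ᵥ y := by
      classical
      induction (Finset.univ : Finset (Fin m)) using Finset.cons_induction with
      | empty => simp
      | cons a s ha ih => rw [Finset.sum_cons, Finset.sum_cons, add_mulVec, ih]
    rw [this]
    exact Finset.sum_congr rfl fun i _ => (smul_mulVec (w i) (B i)⁻¹ y).symm
  -- per-i inequality, summed
  have hkey : ∀ i, 2 * (dotProduct (star u) (v i)).re ≤ qf (H i)⁻¹ u + qf (H i) (v i) :=
    fun i => two_re_dot_le (hHerm i) (hAccH i) u (v i)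
  have hsum : ∑ i, w i * (2 * (dotProduct (star u) (v i)).re)
      ≤ ∑ i, w i * (qf (H i)⁻¹ u + qf (H i) (v i)) :=
    Finset.sum_le_sum fun i _ => mul_le_mul_of_nonneg_left (hkey i) (hw i)
  -- LHS = 2 Re⟨u, x⟩
  have hlhs : ∑ i, w i * (2 * (dotProduct (star u) (v i)).re)
      = 2 * (dotProduct (star u) x).re := by
    rw [← hsumv]
    have : dotProduct (star u) (∑ i, w i • v i) = ∑ i, dotProduct (star u) (w i • v i) := by
      classical
      induction (Finset.univ : Finset (Fin m)) using Finset.cons_induction with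
      | empty => simp
      | cons a s ha ih => rw [Finset.sum_cons, Finset.sum_cons, dotProduct_add, ih]
    rw [this, Complex.re_sum, Finset.mul_sum]
    refine Finset.sum_congr rfl fun i _ => ?_
    rw [dotProduct_smul, Complex.real_smul, Complex.mul_re]
    simp
    ring
  -- D part: ∑ w i * qf (H i)⁻¹ u = qf D u = Re⟨u, x⟩
  have hqfD : ∑ i, w i * qf (H i)⁻¹ u = (dotProduct (star u) x).re := by
    have h1 : qf D u = ∑ i, w i * qf (H i)⁻¹ u := by
      rw [hD, qf_sum]
      exact Finset.sum_congr rfl fun i _ => qf_smul_real _ _ _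
    have h2 : qf D u = (dotProduct (star u) x).re := by rw [qf, hDu]
    rw [← h1, h2]
  -- H part: ∑ w i * qf (H i) (v i) = Re⟨y, x⟩
  have hqfH : ∑ i, w i * qf (H i) (v i) = (dotProduct (star y) x).re := by
    have h1 : ∀ i, qf (H i) (v i) = (dotProduct (star y) (v i)).re := by
      intro i
      rw [hqf i, qf]
      have hBv : (B i) *ᵥ v i = y := (hB i).mulVec_inv_cancel y
      rw [hBv]
      exact re_dot_swap (v i) y
    have h2 : dotProduct (star y) (∑ i, w i • v i) = ∑ i, dotProduct (star y) (w i • v i) := by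
      classical
      induction (Finset.univ : Finset (Fin m)) using Finset.cons_induction with
      | empty => simp
      | cons a s ha ih => rw [Finset.sum_cons, Finset.sum_cons, dotProduct_add, ih]
    calc ∑ i, w i * qf (H i) (v i) = ∑ i, w i * (dotProduct (star y) (v i)).re := by
          exact Finset.sum_congr rfl fun i _ => by rw [h1]
      _ = (dotProduct (star y) (∑ i, w i • v i)).re := by
          rw [h2, Complex.re_sum]
          refine Finset.sum_congr rfl fun i _ => ?_
          rw [dotProduct_smul, Complex.real_smul, Complex.mul_re]
          simp
      _ = (dotProduct (star y) x).re := by rw [hsumv]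
  have hmulsum : ∑ i, w i * (qf (H i)⁻¹ u + qf (H i) (v i))
      = (dotProduct (star u) x).re + (dotProduct (star y) x).re := by
    rw [← hqfD, ← hqfH, ← Finset.sum_add_distrib]
    exact Finset.sum_congr rfl fun i _ => by ring
  rw [hlhs, hmulsum] at hsum
  have hfinal : (dotProduct (star u) x).re ≤ (dotProduct (star y) x).re := by linarith
  have hqfDinv : qf D⁻¹ x = (dotProduct (star u) x).re := by
    rw [qf, ← hu]; exact re_dot_swap x u
  have hqfCinv : qf C⁻¹ x = (dotProduct (star y) x).re := by
    rw [qf, ← hy]; exact re_dot_swap x y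
  constructor
  · rw [hqfDinv, hqfCinv]; exact hfinal
  · rw [hqfCinv, ← hCy]
    have : (dotProduct (star y) (C *ᵥ y)).re = qf C y := rfl
    rw [this]
    exact hAccC.qf_nonneg y

lemma reMat_isHermitian (M : Matrix n n ℂ) : (reMat M).IsHermitian := by
  unfold reMat Matrix.IsHermitian
  rw [conjTranspose_smul, conjTranspose_add, conjTranspose_conjTranspose]
  rw [add_comm Mᴴ M]
  congr 1
  simp [Complex.ext_iff]

lemma smul_one_isHermitian (μ : ℝ) : (μ • (1 : Matrix n n ℂ)).IsHermitian := by
  unfold Matrix.IsHermitian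
  rw [conjTranspose_smul]
  simp

lemma reMat_sub (M N : Matrix n n ℂ) : reMat (M - N) = reMat M - reMat N := by
  unfold reMat
  rw [conjTranspose_sub]
  rw [← smul_sub]
  congr 1
  abel

lemma reMat_smul_one (μ : ℝ) : reMat (μ • (1 : Matrix n n ℂ)) = μ • (1 : Matrix n n ℂ) := by
  unfold reMat
  rw [(smul_one_isHermitian μ).eq]
  rw [← two_smul ℂ (μ • (1 : Matrix n n ℂ)), smul_smul]
  norm_num

lemma isHermitian_smul_real {M : Matrix n n ℂ} (hM : M.IsHermitian) (c : ℝ) :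
    (c • M).IsHermitian := by
  unfold Matrix.IsHermitian
  rw [conjTranspose_smul, hM.eq]
  norm_num

lemma isHermitian_sum {ι : Type*} (s : Finset ι) (M : ι → Matrix n n ℂ)
    (h : ∀ i ∈ s, (M i).IsHermitian) : (∑ i ∈ s, M i).IsHermitian := by
  unfold Matrix.IsHermitian
  rw [conjTranspose_sum]
  exact Finset.sum_congr rfl fun i hi => (h i hi).eq

lemma herm_qf_real {M : Matrix n n ℂ} (hM : M.IsHermitian) (x : n → ℂ) :
    (dotProduct (star x) (M *ᵥ x)).im = 0 := by
  have h1 : (dotProduct (star x) (M *ᵥ x)) = star (dotProduct (star (M *ᵥ x)) x) :=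
    star_dotProduct x (M *ᵥ x)
  have h2 : dotProduct (star (M *ᵥ x)) x = dotProduct (star x) (M *ᵥ x) := by
    rw [star_mulVec, hM.eq, ← dotProduct_mulVec]
  have him := congrArg Complex.im (h1.trans (congrArg star h2))
  simp only [Complex.star_def, Complex.conj_im] at him
  linarith

end SectorAux

open SectorAux in
/-- For sectorial matrices, with `γ = arctan(tan α/(1+μ))`:
`R_μ(Re A, w) + μI ≤ sec²(γ) (Re R_μ(A,w) + μI)` (Loewner order). -/
theorem resAvg_re_le_sec_sq_re_resAvg {n : Type*} [Fintype n] [DecidableEq n] {m : ℕ}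
    (α : ℝ) (hα0 : 0 ≤ α) (hα : α < Real.pi / 2)
    (A : Fin m → Matrix n n ℂ) (hA : ∀ i, InSector α (A i))
    (w : Fin m → ℝ) (hw : ∀ i, 0 ≤ w i) (hw1 : ∑ i, w i = 1) (μ : ℝ) (hμ : 0 ≤ μ) :
    ((((Real.cos (Real.arctan (Real.tan α / (1 + μ)))) ^ 2)⁻¹ : ℝ) •
        (reMat (resAvg μ A w) + μ • (1 : Matrix n n ℂ))
      - (resAvg μ (fun i => reMat (A i)) w + μ • (1 : Matrix n n ℂ))).PosSemidef := by
  classical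
  set s : ℝ := ((Real.cos (Real.arctan (Real.tan α / (1 + μ)))) ^ 2)⁻¹ with hs
  -- s ≥ 1
  have hcos_pos : 0 < Real.cos (Real.arctan (Real.tan α / (1 + μ))) :=
    Real.cos_arctan_pos _
  have hcos_le : Real.cos (Real.arctan (Real.tan α / (1 + μ))) ≤ 1 := Real.cos_le_one _
  have hs1 : 1 ≤ s := by
    rw [hs]
    rw [one_le_inv_iff₀]
    constructor
    · positivity
    · nlinarith
  -- setup
  set B : Fin m → Matrix n n ℂ := fun i => A i + μ • (1 : Matrix n n ℂ) with hBdef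
  set H : Fin m → Matrix n n ℂ := fun i => reMat (A i) + μ • (1 : Matrix n n ℂ) with hHdef
  have hqf_one : ∀ x : n → ℂ, 0 ≤ qf (μ • (1 : Matrix n n ℂ)) x := by
    intro x
    rw [qf_smul_one]
    exact mul_nonneg hμ (re_star_dot_self_nonneg x)
  have hAccB : ∀ i, Acc (B i) := by
    intro i x hx
    rw [hBdef]
    simp only
    rw [qf_add]
    have h1 : 0 < qf (A i) x := (hA i x hx).1
    linarith [hqf_one x]
  have hqfHB : ∀ i, ∀ z, qf (H i) z = qf (B i) z := by
    intro i z
    rw [hHdef, hBdef]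
    simp only
    rw [qf_add, qf_add, qf_reMat]
  have hHermH : ∀ i, (H i).IsHermitian := fun i =>
    ((reMat_isHermitian (A i)).add (smul_one_isHermitian μ))
  have hex : ∃ i, 0 < w i := by
    by_contra h
    push_neg at h
    have : (∑ i, w i) ≤ 0 := Finset.sum_nonpos fun i _ => h i
    rw [hw1] at this
    linarith
  set C : Matrix n n ℂ := ∑ i, w i • (B i)⁻¹ with hCdef
  set D : Matrix n n ℂ := ∑ i, w i • (H i)⁻¹ with hDdef
  have hmain := main_ineq B H hAccB hHermH hqfHB w hw hex C D hCdef hDdef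
  -- identify the matrices
  have hres1 : reMat (resAvg μ A w) + μ • (1 : Matrix n n ℂ) = reMat C⁻¹ := by
    have : resAvg μ A w = C⁻¹ - μ • (1 : Matrix n n ℂ) := by
      rw [resAvg, hCdef, hBdef]
    rw [this, reMat_sub, reMat_smul_one]
    abel
  have hres2 : resAvg μ (fun i => reMat (A i)) w + μ • (1 : Matrix n n ℂ) = D⁻¹ := by
    rw [resAvg, hDdef, hHdef]
    abel
  rw [hres1, hres2]
  -- Hermitian parts
  have hHermD : D.IsHermitian := by
    rw [hDdef]
    exact isHermitian_sum _ _ fun i _ => isHermitian_smul_real (hHermH i).inv (w i)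
  have hHermG : (s • reMat C⁻¹ - D⁻¹).IsHermitian :=
    (isHermitian_smul_real (reMat_isHermitian C⁻¹) s).sub hHermD.inv
  refine PosSemidef.of_dotProduct_mulVec_nonneg hHermG fun x => ?_
  rw [Complex.le_def]
  refine ⟨?_, (herm_qf_real hHermG x).symm⟩
  -- real part inequality
  simp only [Complex.zero_re]
  have hexpand : (dotProduct (star x) ((s • reMat C⁻¹ - D⁻¹) *ᵥ x)).re
      = s * qf (reMat C⁻¹) x - qf D⁻¹ x := by
    rw [sub_mulVec, dotProduct_sub, Complex.sub_re, smul_mulVec, dotProduct_smul,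
      Complex.real_smul, Complex.mul_re]
    simp [qf]
  rw [hexpand, qf_reMat]
  obtain ⟨h1, h2⟩ := hmain x
  nlinarith [mul_nonneg (sub_nonneg.2 hs1) h2]
end
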